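/- Let f and g be EC homotopic EC paths in a digital image (X,κ). Then f_− and g_− have homotopic trivial extensions. If moreover f and g are EC homotopic holding the endpoints fixed, then f_− and g_− have trivial extensions that are homotopic holding the endpoints fixed. -/

import Mathlib

/-- 2-adjacency (c₁-adjacency) on the natural numbers / digital intervals. -/
def natAdj (a b : ℕ) : Prop := b = a + 1 ∨ a = b + 1

/-- Digital `(κ,μ)`-continuity of a function between digital images. -/
def DigCont {X Y : Type*} (κ : X → X → Prop) (μ : Y → Y → Prop) (f : X → Y) : Prop :=
  ∀ a b, κ a b → f a = f b ∨ μ (f a) (f b)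

/-- `(2,κ)`-continuity for functions on `ℕ* = {0,1,2,…}` with 2-adjacency. -/
def ECCont {X : Type*} (κ : X → X → Prop) (f : ℕ → X) : Prop :=
  ∀ a b, natAdj a b → f a = f b ∨ κ (f a) (f b)

/-- An eventually constant (EC) path in `(X,κ)`. -/
def IsECPath {X : Type*} (κ : X → X → Prop) (f : ℕ → X) : Prop :=
  ECCont κ f ∧ ∃ N, ∀ n, N ≤ n → f n = f N

/-- `N_f`, the least index after which `f` is constant. -/
noncomputable def ecN {X : Type*} (f : ℕ → X) : ℕ :=
  sInf {m | ∀ n, m ≤ n → f n = f m}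

/-- An EC homotopy from `f` to `g` (each stage is an EC path). -/
def IsECHomotopy {X : Type*} (κ : X → X → Prop) (f g : ℕ → X) (k : ℕ)
    (H : ℕ → ℕ → X) : Prop :=
  (∀ n, H n 0 = f n) ∧ (∀ n, H n k = g n) ∧
  (∀ n s t, s ≤ k → t ≤ k → natAdj s t → H n s = H n t ∨ κ (H n s) (H n t)) ∧
  (∀ t, t ≤ k → IsECPath κ (fun n => H n t))

/-- The EC homotopy `H` from `f` to `g` holds the endpoints fixed. -/
def ECHoldsEnds {X : Type*} (f g : ℕ → X) (k : ℕ) (H : ℕ → ℕ → X) : Prop :=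
  f 0 = g 0 ∧ (∀ t, t ≤ k → H 0 t = f 0) ∧
  ∃ c, ∀ n, c ≤ n → f n = g n ∧ ∀ t, t ≤ k → H n t = f n

/-- `f` and `g` are EC homotopic. -/
def ECHomotopic {X : Type*} (κ : X → X → Prop) (f g : ℕ → X) : Prop :=
  ∃ k H, IsECHomotopy κ f g k H

/-- `f` and `g` are EC homotopic holding the endpoints fixed. -/
def ECHomotopicFix {X : Type*} (κ : X → X → Prop) (f g : ℕ → X) : Prop :=
  ∃ k H, IsECHomotopy κ f g k H ∧ ECHoldsEnds f g k H

/-- A finite digital path `f : [0,m]_ℤ → X`, represented by its length `len`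
and its values, frozen (constant) beyond `len`. -/
structure DPath (X : Type*) where
  len : ℕ
  toFun : ℕ → X
  frozen : ∀ n, len ≤ n → toFun n = toFun len

/-- `p_∞ : ℕ* → X`, the eventually constant extension of a finite path. -/
def DPath.inf {X : Type*} (p : DPath X) : ℕ → X := fun n => p.toFun (min n p.len)

/-- `(2,κ)`-continuity of a finite path on its domain `[0,len]_ℤ`. -/
def DPath.IsCont {X : Type*} (κ : X → X → Prop) (p : DPath X) : Prop :=
  ∀ a b, a ≤ p.len → b ≤ p.len → natAdj a b →
    p.toFun a = p.toFun b ∨ κ (p.toFun a) (p.toFun b)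

/-- `f_-`, the restriction of an EC path `f` to `[0, N_f]_ℤ`. -/
noncomputable def ecTrunc {X : Type*} (f : ℕ → X) : DPath X where
  len := ecN f
  toFun := fun n => f (min n (ecN f))
  frozen := by intro n hn; simp [min_eq_right hn]

/-- Concatenation (product) `p * q` of finite paths. -/
def DPath.concat {X : Type*} (p q : DPath X) : DPath X where
  len := p.len + q.len
  toFun := fun t => if t < p.len then p.toFun t else q.toFun (t - p.len)
  frozen := by
    intro n hn
    have h1 : ¬ n < p.len := by omega
    have h2 : ¬ p.len + q.len < p.len := by omega
    simp only [if_neg h1, if_neg h2]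
    rw [q.frozen (n - p.len) (by omega), Nat.add_sub_cancel_left]

/-- A constant (trivial) path. -/
def IsConstPath {X : Type*} (p : DPath X) : Prop := ∀ n, p.toFun n = p.toFun 0

/-- The product `p * l₀ * l₁ * ⋯` of a nonempty family of paths. -/
def concatAll {X : Type*} (p : DPath X) (l : List (DPath X)) : DPath X :=
  l.foldl DPath.concat p

/-- Consecutive paths in the list are composable (endpoints match). -/
def ChainOK {X : Type*} (l : List (DPath X)) : Prop :=
  l.Chain' (fun p q => p.toFun p.len = q.toFun 0)

/-- `TrivExt κ f f'` : the path `f'` is a trivial extension of the path `f`: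
`f = f₁ * ⋯ * f_k`, `f' = F₁ * ⋯ * F_p`, with indices `i₁ < ⋯ < i_k`,
`F_{i_j} = f_j`, and every other `F_i` a constant loop. -/
def TrivExt {X : Type*} (κ : X → X → Prop) (f f' : DPath X) : Prop :=
  ∃ (a : DPath X) (fs : List (DPath X)) (b : DPath X) (Fs : List (DPath X)),
    (∀ r ∈ a :: fs, DPath.IsCont κ r) ∧ (∀ r ∈ b :: Fs, DPath.IsCont κ r) ∧
    ChainOK (a :: fs) ∧ ChainOK (b :: Fs) ∧
    f = concatAll a fs ∧ f' = concatAll b Fs ∧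
    ∃ idx : Fin (a :: fs).length → Fin (b :: Fs).length,
      StrictMono idx ∧
      (∀ j, (b :: Fs).get (idx j) = (a :: fs).get j) ∧
      (∀ i, (∀ j, idx j ≠ i) → IsConstPath ((b :: Fs).get i))

/-- A digital homotopy `H : [0,m]_ℤ × [0,k]_ℤ → X` between paths `F` and `G`. -/
def IsPathHomotopy {X : Type*} (κ : X → X → Prop) (m k : ℕ) (F G : ℕ → X)
    (H : ℕ → ℕ → X) : Prop :=
  (∀ t, t ≤ m → H t 0 = F t) ∧ (∀ t, t ≤ m → H t k = G t) ∧
  (∀ t, t ≤ m → ∀ s₁ s₂, s₁ ≤ k → s₂ ≤ k → natAdj s₁ s₂ →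
    H t s₁ = H t s₂ ∨ κ (H t s₁) (H t s₂)) ∧
  (∀ s, s ≤ k → ∀ t₁ t₂, t₁ ≤ m → t₂ ≤ m → natAdj t₁ t₂ →
    H t₁ s = H t₂ s ∨ κ (H t₁ s) (H t₂ s))

/-- The homotopy `H` between paths `F, G : [0,m]_ℤ → X` holds the endpoints fixed. -/
def PathHoldsEnds {X : Type*} (m k : ℕ) (F G : ℕ → X) (H : ℕ → ℕ → X) : Prop :=
  F 0 = G 0 ∧ F m = G m ∧ ∀ s, s ≤ k → H 0 s = F 0 ∧ H m s = F m

/-- Paths `F, G : [0,m]_ℤ → X` are homotopic. -/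
def PathHomotopic {X : Type*} (κ : X → X → Prop) (m : ℕ) (F G : ℕ → X) : Prop :=
  ∃ k H, IsPathHomotopy κ m k F G H

/-- Paths `F, G : [0,m]_ℤ → X` are homotopic holding the endpoints fixed. -/
def PathHomotopicFix {X : Type*} (κ : X → X → Prop) (m : ℕ) (F G : ℕ → X) : Prop :=
  ∃ k H, IsPathHomotopy κ m k F G H ∧ PathHoldsEnds m k F G H

/-- `f` is constant from `ecN f` on. -/
lemma ecN_spec {X : Type*} {κ : X → X → Prop} {f : ℕ → X} (hf : IsECPath κ f) :
    ∀ n, ecN f ≤ n → f n = f (ecN f) := by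
  obtain ⟨N, hN⟩ := hf.2
  exact Nat.sInf_mem (⟨N, hN⟩ : Set.Nonempty {m | ∀ n, m ≤ n → f n = f m})

/-- A constant path of length `l` at value `x`. -/
def cpath {X : Type*} (x : X) (l : ℕ) : DPath X := ⟨l, fun _ => x, fun _ _ => rfl⟩

lemma cpath_cont {X : Type*} (κ : X → X → Prop) (x : X) (l : ℕ) :
    DPath.IsCont κ (cpath x l) := fun _ _ _ _ _ => Or.inl rfl

lemma ecTrunc_cont {X : Type*} {κ : X → X → Prop} {f : ℕ → X} (hf : IsECPath κ f) :
    DPath.IsCont κ (ecTrunc f) := by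
  intro a b ha hb hadj
  show f (min a (ecN f)) = f (min b (ecN f)) ∨ κ (f (min a (ecN f))) (f (min b (ecN f)))
  rw [min_eq_left (show a ≤ ecN f from ha), min_eq_left (show b ≤ ecN f from hb)]
  exact hf.1 a b hadj

/-- Extension of `ecTrunc f` to length `m` by a constant tail. -/
noncomputable def ecExt {X : Type*} (f : ℕ → X) (m : ℕ) : DPath X :=
  DPath.concat (ecTrunc f) (cpath (f (ecN f)) (m - ecN f))

lemma ecExt_len {X : Type*} (f : ℕ → X) {m : ℕ} (hm : ecN f ≤ m) :
    (ecExt f m).len = m := by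
  simp [ecExt, DPath.concat, ecTrunc, cpath]; omega

lemma ecExt_toFun {X : Type*} {κ : X → X → Prop} {f : ℕ → X} (hf : IsECPath κ f)
    (m : ℕ) : ∀ t, (ecExt f m).toFun t = f t := by
  intro t
  simp only [ecExt, DPath.concat, ecTrunc, cpath]
  by_cases h : t < ecN f
  · simp [if_pos h, min_eq_left (Nat.le_of_lt h)]
  · exact (if_neg h).trans (ecN_spec hf t (by omega)).symm

lemma ecExt_trivExt {X : Type*} {κ : X → X → Prop} {f : ℕ → X} (hf : IsECPath κ f)
    (m : ℕ) : TrivExt κ (ecTrunc f) (ecExt f m) := by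
  refine ⟨ecTrunc f, [], ecTrunc f, [cpath (f (ecN f)) (m - ecN f)], ?_, ?_, ?_, ?_,
    rfl, rfl, fun _ => ⟨0, by simp⟩, ?_, ?_, ?_⟩
  · intro r hr
    simp only [List.mem_singleton] at hr
    subst hr; exact ecTrunc_cont hf
  · intro r hr
    rcases List.mem_cons.mp hr with h | h
    · subst h; exact ecTrunc_cont hf
    · simp only [List.mem_singleton] at h
      subst h; exact cpath_cont κ _ _
  · exact List.isChain_singleton _
  · refine List.isChain_cons_cons.mpr ⟨?_, List.isChain_singleton _⟩
    simp [ecTrunc, cpath]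
  · intro i j h
    have hi := i.isLt
    have hj := j.isLt
    simp only [List.length_singleton] at hi hj
    have := Fin.lt_def.mp h
    omega
  · intro j
    have hj : j = ⟨0, by simp⟩ := by
      have := j.isLt
      simp only [List.length_singleton] at this
      exact Fin.ext (Nat.lt_one_iff.mp this)
    rw [hj]
    rfl
  · intro i hi
    have hi2 := i.isLt
    simp only [List.length_cons, List.length_singleton] at hi2
    rcases Nat.lt_succ_iff_lt_or_eq.mp hi2 with h | h
    · exfalso
      apply hi ⟨0, by simp⟩
      exact Fin.ext (by simpa using (Nat.lt_one_iff.mp h).symm)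
    · have : i = ⟨1, by simp⟩ := Fin.ext h
      subst this
      intro n; rfl

/-- If EC paths `f` and `g` are EC homotopic, then `f₋` and `g₋`
have homotopic trivial extensions; if the EC homotopy holds the endpoints fixed,
the trivial extensions can be chosen homotopic holding the endpoints fixed. -/
theorem ec_homotopic_trunc_trivial_extensions {X : Type*} (κ : X → X → Prop)
    (hκ : Symmetric κ) (f g : ℕ → X) (hf : IsECPath κ f) (hg : IsECPath κ g) :
    (ECHomotopic κ f g →
      ∃ F G : DPath X, TrivExt κ (ecTrunc f) F ∧ TrivExt κ (ecTrunc g) G ∧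
        F.len = G.len ∧ PathHomotopic κ F.len F.toFun G.toFun) ∧
    (ECHomotopicFix κ f g →
      ∃ F G : DPath X, TrivExt κ (ecTrunc f) F ∧ TrivExt κ (ecTrunc g) G ∧
        F.len = G.len ∧ PathHomotopicFix κ F.len F.toFun G.toFun) := by
  have key : ∀ k H, IsECHomotopy κ f g k H → ∀ m,
      IsPathHomotopy κ m k (ecExt f m).toFun (ecExt g m).toFun H := by
    rintro k H ⟨hH0, hHk, hHs, hHt⟩ m
    refine ⟨?_, ?_, ?_, ?_⟩
    · intro t _; rw [ecExt_toFun hf]; exact hH0 t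
    · intro t _; rw [ecExt_toFun hg]; exact hHk t
    · intro t _ s₁ s₂ h1 h2 hadj; exact hHs t s₁ s₂ h1 h2 hadj
    · intro s hs t₁ t₂ _ _ hadj; exact (hHt s hs).1 t₁ t₂ hadj
  constructor
  · rintro ⟨k, H, hH⟩
    set m := max (ecN f) (ecN g) with hm
    have hmf : ecN f ≤ m := le_max_left _ _
    have hmg : ecN g ≤ m := le_max_right _ _
    refine ⟨ecExt f m, ecExt g m, ecExt_trivExt hf m, ecExt_trivExt hg m, ?_, ?_⟩
    · rw [ecExt_len f hmf, ecExt_len g hmg]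
    · rw [ecExt_len f hmf]
      exact ⟨k, H, key k H hH m⟩
  · rintro ⟨k, H, hH, h0, hfix0, c, hc⟩
    set m := max (max (ecN f) (ecN g)) c with hm
    have hmf : ecN f ≤ m := le_trans (le_max_left _ _) (le_max_left _ _)
    have hmg : ecN g ≤ m := le_trans (le_max_right _ _) (le_max_left _ _)
    have hmc : c ≤ m := le_max_right _ _
    refine ⟨ecExt f m, ecExt g m, ecExt_trivExt hf m, ecExt_trivExt hg m, ?_, ?_⟩
    · rw [ecExt_len f hmf, ecExt_len g hmg]
    · rw [ecExt_len f hmf]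
      refine ⟨k, H, key k H hH m, ?_, ?_, ?_⟩
      · rw [ecExt_toFun hf, ecExt_toFun hg]; exact h0
      · rw [ecExt_toFun hf, ecExt_toFun hg]; exact (hc m hmc).1
      · intro s hs
        rw [ecExt_toFun hf, ecExt_toFun hf]
        exact ⟨hfix0 s hs, (hc m hmc).2 s hs⟩
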